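/- Let f be smooth with gradient, h be convex, X ∈ ℝ^(n×r), t > 0, and define g(V) = ⟨∇f(X), V⟩ + (1/(2t))‖V‖² + h(X + V). Let T be a linear subspace and V* a minimizer of g over T. Then for every α ∈ [0,1], g(αV*) − g(0) ≤ ((α−2)α/(2t))‖V*‖². -/

import Mathlib

/-- descent property of the minimizer of the proximal-gradient
subproblem over a subspace. -/
theorem stmt_1 {n r : ℕ} (t : ℝ) (ht : 0 < t)
    (f h : EuclideanSpace ℝ (Fin n × Fin r) → ℝ)
    (X c : EuclideanSpace ℝ (Fin n × Fin r))
    (hc : HasGradientAt f c X)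
    (hh : ConvexOn ℝ Set.univ h)
    (g : EuclideanSpace ℝ (Fin n × Fin r) → ℝ)
    (hg : ∀ V, g V = (inner ℝ c V : ℝ) + (1 / (2 * t)) * ‖V‖ ^ 2 + h (X + V))
    (T : Submodule ℝ (EuclideanSpace ℝ (Fin n × Fin r)))
    (V : EuclideanSpace ℝ (Fin n × Fin r)) (hVT : V ∈ T)
    (hmin : ∀ W ∈ T, g V ≤ g W) :
    ∀ α ∈ Set.Icc (0 : ℝ) 1,
      g (α • V) - g 0 ≤ ((α - 2) * α / (2 * t)) * ‖V‖ ^ 2 := by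
  have hg0 : g 0 = h X := by
    rw [hg]; simp
  have hconv : ∀ a ∈ Set.Icc (0:ℝ) 1, h (X + a • V) ≤ a * h (X + V) + (1-a) * h X := by
    intro a ha
    have hb : (0:ℝ) ≤ 1 - a := by linarith [ha.2]
    have hab : a + (1 - a) = 1 := by ring
    have hcc := hh.2 (Set.mem_univ (X + V)) (Set.mem_univ X) ha.1 hb hab
    have heq : a • (X + V) + (1-a) • X = X + a • V := by module
    rw [heq] at hcc
    simpa using hcc
  have hgsmul : ∀ a : ℝ, 0 ≤ a →
      g (a • V) = a * (inner ℝ c V : ℝ) + (1/(2*t)) * (a^2 * ‖V‖^2) + h (X + a • V) := by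
    intro a ha
    rw [hg, real_inner_smul_right, norm_smul, Real.norm_eq_abs, abs_of_nonneg ha]
    ring
  have key : ∀ a ∈ Set.Icc (0:ℝ) 1,
      g (a • V) - g 0 ≤ a * (g V - g 0) + ((a^2 - a)/(2*t)) * ‖V‖^2 := by
    intro a ha
    have h1 := hconv a ha
    rw [hgsmul a ha.1, hg V, hg0]
    ring_nf
    ring_nf at h1
    linarith [h1]
  set K : ℝ := (1/(2*t)) * ‖V‖^2 with hKdef
  have hK : 0 ≤ K := by positivity
  have hforall : ∀ β ∈ Set.Ioo (0:ℝ) 1, g V - g 0 ≤ -((1-β) * K) := by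
    intro β hβ
    have hmem : (1-β) ∈ Set.Icc (0:ℝ) 1 := ⟨by linarith [hβ.2], by linarith [hβ.1]⟩
    have h1 := key (1-β) hmem
    have h2 := hmin ((1-β) • V) (T.smul_mem _ hVT)
    have hmul : β * (g V - g 0) ≤ β * (-((1-β) * K)) := by
      have h2t : (0:ℝ) < 2 * t := by linarith
      rw [hKdef]
      ring_nf
      ring_nf at h1
      linarith [h1, h2]
    exact le_of_mul_le_mul_left hmul hβ.1
  have hstrong : g V - g 0 ≤ -K := by
    refine le_of_forall_pos_le_add ?_
    intro ε hε
    rcases eq_or_lt_of_le hK with hK0 | hKpos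
    · have := hforall (1/2) ⟨by norm_num, by norm_num⟩
      rw [← hK0] at this ⊢
      linarith
    · set β : ℝ := min (1/2) (ε / K) with hβdef
      have hβpos : 0 < β := lt_min (by norm_num) (div_pos hε hKpos)
      have hβ1 : β < 1 := lt_of_le_of_lt (min_le_left _ _) (by norm_num)
      have h1 := hforall β ⟨hβpos, hβ1⟩
      have hβK : β * K ≤ ε := by
        calc β * K ≤ (ε / K) * K := by
              exact mul_le_mul_of_nonneg_right (min_le_right _ _) hK
          _ = ε := div_mul_cancel₀ _ (ne_of_gt hKpos)
      linarith
  intro α hα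
  have h1 := key α hα
  have h2 : α * (g V - g 0) ≤ α * (-K) := mul_le_mul_of_nonneg_left hstrong hα.1
  have h2t : (0:ℝ) < 2 * t := by linarith
  rw [hKdef] at h2
  have hexp : ((α - 2) * α / (2 * t)) * ‖V‖ ^ 2
      = ((α^2 - α)/(2*t)) * ‖V‖^2 + α * (-((1/(2*t)) * ‖V‖^2)) := by
    field_simp; ring
  rw [hexp]
  linarith
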